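/- Let (S, A, n, u) be an organizer (A₀ n = A₁ n with n a full internal entity vector; A₀ᵀ u = A₁ᵀ u with u a full internal transformation vector). Then every internal entity lies on some directed cycle of the system graph of A, i.e., every internal entity is a catalyst. -/

import Mathlib

open Finset

/-- The system graph of a subsystem `(A0, A1)`: edges `j → i` when `A0 i j > 0`
and `i → j` when `A1 i j > 0`. -/
def sysStep {T E : Type*} (A0 A1 : T → E → ℕ) : (E ⊕ T) → (E ⊕ T) → Prop
  | Sum.inl j, Sum.inr i => 0 < A0 i j
  | Sum.inr i, Sum.inl j => 0 < A1 i j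
  | _, _ => False

/-- Every positive edge of a nonnegative integer circulation lies on a cycle:
its source lies on a directed cycle of the positive-edge graph. -/
lemma circ_cycle {V : Type*} [Fintype V] (c : V → V → ℕ)
    (hc : ∀ v, ∑ w, c v w = ∑ w, c w v) {v w : V} (hvw : 0 < c v w) :
    Relation.TransGen (fun a b => 0 < c a b) v v := by
  classical
  set rel := fun a b => 0 < c a b with hrel
  set R : Finset V := univ.filter (fun x => Relation.TransGen rel v x) with hR
  have hwR : w ∈ R := by
    simp only [hR, mem_filter, mem_univ, true_and]
    exact Relation.TransGen.single hvw
  have hclosed : ∀ x ∈ R, ∀ y, 0 < c x y → y ∈ R := by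
    intro x hx y hy
    simp only [hR, mem_filter, mem_univ, true_and] at hx ⊢
    exact hx.tail hy
  have hOut : ∑ x ∈ R, ∑ y ∈ Rᶜ, c x y = 0 := by
    apply Finset.sum_eq_zero; intro x hx
    apply Finset.sum_eq_zero; intro y hy
    by_contra h
    exact (Finset.mem_compl.mp hy) (hclosed x hx y (Nat.pos_of_ne_zero h))
  have hsum : ∑ x ∈ R, ∑ y, c x y = ∑ x ∈ R, ∑ y, c y x :=
    Finset.sum_congr rfl (fun x _ => hc x)
  have hsplit1 : ∑ x ∈ R, ∑ y, c x y
      = ∑ x ∈ R, ∑ y ∈ R, c x y + ∑ x ∈ R, ∑ y ∈ Rᶜ, c x y := by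
    rw [← Finset.sum_add_distrib]
    exact Finset.sum_congr rfl (fun x _ => (Finset.sum_add_sum_compl R _).symm)
  have hsplit2 : ∑ x ∈ R, ∑ y, c y x
      = ∑ x ∈ R, ∑ y ∈ R, c y x + ∑ x ∈ R, ∑ y ∈ Rᶜ, c y x := by
    rw [← Finset.sum_add_distrib]
    exact Finset.sum_congr rfl (fun x _ => (Finset.sum_add_sum_compl R _).symm)
  have hcomm : ∑ x ∈ R, ∑ y ∈ R, c x y = ∑ x ∈ R, ∑ y ∈ R, c y x :=
    Finset.sum_comm
  have hIn : ∑ x ∈ R, ∑ y ∈ Rᶜ, c y x = 0 := by omega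
  -- conclude v ∈ R
  by_cases hvR : v ∈ R
  · simpa only [hR, mem_filter, mem_univ, true_and] using hvR
  · exfalso
    have : c v w ≤ ∑ x ∈ R, ∑ y ∈ Rᶜ, c y x :=
      calc c v w ≤ ∑ y ∈ Rᶜ, c y w :=
            Finset.single_le_sum (f := fun y => c y w)
              (fun _ _ => Nat.zero_le _) (Finset.mem_compl.mpr hvR)
        _ ≤ ∑ x ∈ R, ∑ y ∈ Rᶜ, c y x :=
            Finset.single_le_sum (f := fun x => ∑ y ∈ Rᶜ, c y x)
              (fun _ _ => Nat.zero_le _) hwR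
    omega

/-- In an organizer, every internal entity lies on a directed cycle of the system graph, i.e. every internal entity is a catalyst. -/
theorem stmt_3 {T E : Type*} [Fintype T] [Fintype E]
    (S0 S1 A0 A1 : T → E → ℕ)
    (hA0 : ∀ i j, A0 i j ≤ S0 i j) (hA1 : ∀ i j, A1 i j ≤ S1 i j)
    (hAne : ∃ i j, 0 < A0 i j ∨ 0 < A1 i j)
    (n : E → ℕ) (u : T → ℕ)
    (hnfull : ∀ j : E, (∃ i, 0 < A0 i j ∨ 0 < A1 i j) ↔ 0 < n j)
    (hufull : ∀ i : T, (∃ j, 0 < A0 i j ∨ 0 < A1 i j) ↔ 0 < u i)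
    (hcons : ∀ i : T, ∑ j, A0 i j * n j = ∑ j, A1 i j * n j)
    (hcyc : ∀ j : E, ∑ i, A0 i j * u i = ∑ i, A1 i j * u i) :
    ∀ j : E, (∃ i, 0 < A0 i j ∨ 0 < A1 i j) →
      Relation.TransGen (sysStep A0 A1) (Sum.inl j) (Sum.inl j) := by
  classical
  -- the circulation on the system graph
  set c : (E ⊕ T) → (E ⊕ T) → ℕ := fun a b =>
    match a, b with
    | Sum.inl j, Sum.inr i => A0 i j * n j * u i
    | Sum.inr i, Sum.inl j => A1 i j * n j * u i
    | _, _ => 0 with hc_def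
  have hc : ∀ v, ∑ w, c v w = ∑ w, c w v := by
    intro v
    cases v with
    | inl j =>
        rw [Fintype.sum_sum_type, Fintype.sum_sum_type]
        simp only [hc_def]
        have h0 : ∀ j' : E, (0 : ℕ) = 0 := fun _ => rfl
        calc (∑ j' : E, 0) + ∑ i : T, A0 i j * n j * u i
              = n j * ∑ i : T, A0 i j * u i := by
                rw [Finset.sum_const_zero, zero_add, Finset.mul_sum]
                congr 1; ext i; ring
          _ = n j * ∑ i : T, A1 i j * u i := by rw [hcyc j]
          _ = (∑ j' : E, 0) + ∑ i : T, A1 i j * n j * u i := by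
                rw [Finset.sum_const_zero, zero_add, Finset.mul_sum]
                congr 1; ext i; ring
    | inr i =>
        rw [Fintype.sum_sum_type, Fintype.sum_sum_type]
        simp only [hc_def]
        calc (∑ j : E, A1 i j * n j * u i) + ∑ i' : T, 0
              = u i * ∑ j : E, A1 i j * n j := by
                rw [Finset.sum_const_zero, add_zero, Finset.mul_sum]
                congr 1; ext j; ring
          _ = u i * ∑ j : E, A0 i j * n j := by rw [hcons i]
          _ = (∑ j : E, A0 i j * n j * u i) + ∑ i' : T, 0 := by
                rw [Finset.sum_const_zero, add_zero, Finset.mul_sum]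
                congr 1; ext j; ring
  have hmono : ∀ a b, 0 < c a b → sysStep A0 A1 a b := by
    intro a b h
    cases a with
    | inl j =>
        cases b with
        | inl j' => simp [hc_def] at h
        | inr i =>
            simp only [hc_def] at h
            exact Nat.pos_of_ne_zero (fun h0 => by simp [sysStep, h0] at h)
    | inr i =>
        cases b with
        | inl j =>
            simp only [hc_def] at h
            exact Nat.pos_of_ne_zero (fun h0 => by simp [sysStep, h0] at h)
        | inr i' => simp [hc_def] at h
  intro j hj
  have hnj : 0 < n j := (hnfull j).mp hj
  -- find a positive out-edge from j in the circulation
  have hpos : ∃ i, 0 < A0 i j * u i := by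
    by_contra h
    push_neg at h
    have h0 : ∑ i, A0 i j * u i = 0 :=
      Finset.sum_eq_zero (fun i _ => Nat.le_zero.mp (h i))
    obtain ⟨i, hi⟩ := hj
    have hui : 0 < u i := (hufull i).mp ⟨j, hi⟩
    cases hi with
    | inl h1 =>
        have : 0 < A0 i j * u i := Nat.mul_pos h1 hui
        have := h i; omega
    | inr h1 =>
        have hsum1 : 0 < ∑ i', A1 i' j * u i' :=
          Finset.sum_pos' (fun _ _ => Nat.zero_le _)
            ⟨i, Finset.mem_univ i, Nat.mul_pos h1 hui⟩
        rw [← hcyc j, h0] at hsum1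
        exact absurd hsum1 (lt_irrefl 0)
  obtain ⟨i, hi⟩ := hpos
  have hui : 0 < u i := Nat.pos_of_ne_zero (fun h0 => by simp [h0] at hi)
  have hA0ij : 0 < A0 i j := Nat.pos_of_ne_zero (fun h0 => by simp [h0] at hi)
  have hedge : 0 < c (Sum.inl j) (Sum.inr i) := by
    simp only [hc_def]
    exact Nat.mul_pos (Nat.mul_pos hA0ij hnj) hui
  exact Relation.TransGen.mono hmono _ _ (circ_cycle c hc (v := Sum.inl j) (w := Sum.inr i) hedge)
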